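/- The map f_b from Cantor space to the space of Borel probability measures on Cantor space, sending X to the Bernoulli measure with success probability Σ_n X(n)2^{-(n+1)}, is continuous (indeed computable as a map of computable metric spaces). -/

import Mathlib

open MeasureTheory Filter

abbrev Cantor : Type := ℕ → Bool
abbrev Str : Type := List Bool

def restr (X : Cantor) (n : ℕ) : Str := (List.range n).map X

def cyl (σ : Str) : Set Cantor := {X | restr X σ.length = σ}

def openOf (V : Set Str) : Set Cantor := ⋃ σ ∈ V, cyl σ

def CE {α : Type} [Primcodable α] (S : Set α) : Prop :=
  ∃ f : α →. Unit, Partrec f ∧ ∀ a, a ∈ S ↔ (f a).Dom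

def MLTest (μ : Measure Cantor) (U : ℕ → Set Str) : Prop :=
  CE {p : ℕ × Str | p.2 ∈ U p.1} ∧ ∀ i, μ (openOf (U i)) ≤ 1 / 2 ^ i

def MLRandom (μ : Measure Cantor) (X : Cantor) : Prop :=
  ∀ U, MLTest μ U → ∃ i, X ∉ openOf (U i)

noncomputable def cm (μ : Measure Cantor) (σ : Str) : ℝ := (μ (cyl σ)).toReal

def ComputableMeasure (μ : Measure Cantor) : Prop :=
  IsProbabilityMeasure μ ∧
    ∃ g : Str × ℕ → ℚ, Computable g ∧
      ∀ σ n, |(g (σ, n) : ℝ) - cm μ σ| ≤ (2 : ℝ)⁻¹ ^ n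

def interleave (Z Y : Cantor) : Cantor := fun n => if n % 2 = 0 then Z (n / 2) else Y (n / 2)

/-- The real number in `[0,1]` with binary expansion `X`. -/
noncomputable def binVal (X : Cantor) : ℝ := ∑' n : ℕ, if X n then ((2 : ℝ) ^ (n + 1))⁻¹ else 0

/-- The cylinder values of the Bernoulli measure with success probability `p`. -/
def bernFn (p : ℝ) : Str → ℝ := fun σ => p ^ σ.count true * (1 - p) ^ σ.count false

/-- The maximum difference of two cylinder-value functions over strings of length `n`. -/
noncomputable def levDiff (f g : Str → ℝ) (n : ℕ) : ℝ :=
  sSup {x : ℝ | ∃ v : Fin n → Bool, x = |f (List.ofFn v) - g (List.ofFn v)|}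

/-- The metric on the space of measures (represented by cylinder values):
`d(μ,ν) = Σₙ 2⁻ⁿ · max_{σ ∈ 2ⁿ} |μ(σ) − ν(σ)|`. -/
noncomputable def Dm (f g : Str → ℝ) : ℝ := ∑' n : ℕ, (2 : ℝ)⁻¹ ^ n * levDiff f g n

set_option maxHeartbeats 1000000

lemma sumgeo : Summable (fun n : ℕ => (2 : ℝ)⁻¹ ^ (n + 1)) := by
  simp only [pow_succ]
  exact (summable_geometric_of_lt_one (by norm_num) (by norm_num)).mul_right _

lemma bv_le (X : Cantor) (n : ℕ) :
    (if X n then ((2 : ℝ) ^ (n + 1))⁻¹ else 0) ≤ (2 : ℝ)⁻¹ ^ (n + 1) := by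
  rw [← inv_pow]
  split <;> [exact le_refl _; positivity]

lemma summable_bv (X : Cantor) :
    Summable (fun n : ℕ => if X n then ((2 : ℝ) ^ (n + 1))⁻¹ else 0) :=
  Summable.of_nonneg_of_le (fun n => by positivity) (bv_le X) sumgeo

lemma binVal_nonneg (X : Cantor) : 0 ≤ binVal X :=
  tsum_nonneg (fun n => by positivity)

lemma tsumgeo : ∑' n : ℕ, (2 : ℝ)⁻¹ ^ (n + 1) = 1 := by
  simp only [pow_succ, tsum_mul_right,
    tsum_geometric_of_lt_one (by norm_num : (0:ℝ) ≤ 2⁻¹) (by norm_num)]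
  norm_num

lemma binVal_le_one (X : Cantor) : binVal X ≤ 1 := by
  refine le_trans (Summable.tsum_le_tsum (bv_le X) (summable_bv X) sumgeo) ?_
  rw [tsumgeo]

lemma binVal_dist (X Y : Cantor) (N : ℕ) (h : ∀ n < N, X n = Y n) :
    |binVal X - binVal Y| ≤ (2 : ℝ)⁻¹ ^ N := by
  have hf := summable_bv X
  have hg := summable_bv Y
  set f : ℕ → ℝ := fun n => if X n then ((2 : ℝ) ^ (n + 1))⁻¹ else 0 with hfdef
  set g : ℕ → ℝ := fun n => if Y n then ((2 : ℝ) ^ (n + 1))⁻¹ else 0 with hgdef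
  have hc : Summable (fun n => if n < N then (0:ℝ) else (2 : ℝ)⁻¹ ^ (n + 1)) := by
    refine Summable.of_nonneg_of_le (fun n => ?_) (fun n => ?_) sumgeo
    · split <;> positivity
    · split <;> [positivity; exact le_refl _]
  have hdiff : binVal X - binVal Y = ∑' n, (f n - g n) := (Summable.tsum_sub hf hg).symm
  have hbound : ∀ n, |f n - g n| ≤ if n < N then (0:ℝ) else (2 : ℝ)⁻¹ ^ (n + 1) := by
    intro n
    simp only [hfdef, hgdef]
    by_cases hn : n < N
    · rw [h n hn]; simp [hn]
    · rw [if_neg hn, ← inv_pow]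
      have h0 : (0:ℝ) ≤ (2:ℝ)⁻¹ ^ (n+1) := by positivity
      split <;> split <;>
        simp [abs_of_nonneg, abs_of_nonpos, abs_nonpos_iff] <;> positivity
  rw [hdiff]
  calc |∑' n, (f n - g n)| ≤ ∑' n, |f n - g n| := by
        have := norm_tsum_le_tsum_norm (f := fun n => f n - g n)
          (by simpa only [Real.norm_eq_abs] using (hf.sub hg).abs)
        simpa only [Real.norm_eq_abs] using this
    _ ≤ ∑' n, if n < N then (0:ℝ) else (2 : ℝ)⁻¹ ^ (n + 1) :=
        Summable.tsum_le_tsum hbound ((hf.sub hg).abs) hc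
    _ = (2 : ℝ)⁻¹ ^ N := by
        rw [← Summable.sum_add_tsum_nat_add N hc]
        have h1 : (∑ i ∈ Finset.range N,
            if i < N then (0:ℝ) else (2 : ℝ)⁻¹ ^ (i + 1)) = 0 :=
          Finset.sum_eq_zero (fun i hi => by simp [Finset.mem_range.mp hi])
        have h2 : ∀ i : ℕ, (if i + N < N then (0:ℝ) else (2 : ℝ)⁻¹ ^ (i + N + 1))
            = (2 : ℝ)⁻¹ ^ (N + 1) * (2 : ℝ)⁻¹ ^ i := by
          intro i
          rw [if_neg (by omega), ← pow_add]
          ring_nf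
        rw [h1, zero_add, tsum_congr h2, tsum_mul_left,
          tsum_geometric_of_lt_one (by norm_num) (by norm_num)]
        ring_nf

lemma restr_eq {X Y : Cantor} {N : ℕ} (h : restr X N = restr Y N) :
    ∀ n < N, X n = Y n := by
  intro n hn
  have := congrArg (fun l : Str => l[n]?) h
  simpa [restr, List.getElem?_map, List.getElem?_range, hn] using this

lemma pow_abs_diff {p q : ℝ} (hp0 : 0 ≤ p) (hp1 : p ≤ 1) (hq0 : 0 ≤ q) (hq1 : q ≤ 1) :
    ∀ a : ℕ, |p ^ a - q ^ a| ≤ a * |p - q| := by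
  intro a
  induction a with
  | zero => simp
  | succ a ih =>
    have key : p ^ (a+1) - q ^ (a+1) = (p - q) * p ^ a + q * (p ^ a - q ^ a) := by ring
    calc |p ^ (a+1) - q ^ (a+1)| ≤ |(p - q) * p ^ a| + |q * (p ^ a - q ^ a)| := by
          rw [key]; exact abs_add_le _ _
      _ ≤ |p - q| * 1 + 1 * (a * |p - q|) := by
          apply add_le_add
          · rw [abs_mul]
            refine mul_le_mul (le_refl _) ?_ (abs_nonneg _) (abs_nonneg _)
            rw [abs_of_nonneg (by positivity : (0:ℝ) ≤ p ^ a)]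
            exact pow_le_one₀ hp0 hp1
          · rw [abs_mul]
            refine mul_le_mul ?_ ih (abs_nonneg _) zero_le_one
            rw [abs_of_nonneg hq0]; exact hq1
      _ = (↑(a+1)) * |p - q| := by push_cast; ring

lemma count_tf (σ : Str) : σ.count true + σ.count false = σ.length := by
  induction σ with
  | nil => simp
  | cons b t ih => cases b <;> simp [List.count_cons] <;> omega

lemma bern_diff {p q : ℝ} (hp0 : 0 ≤ p) (hp1 : p ≤ 1) (hq0 : 0 ≤ q) (hq1 : q ≤ 1)
    (σ : Str) : |bernFn p σ - bernFn q σ| ≤ σ.length * |p - q| := by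
  set a := σ.count true
  set b := σ.count false
  have h1 : |1 - p| ≤ 1 := by rw [abs_of_nonneg (by linarith)]; linarith
  have key : bernFn p σ - bernFn q σ
      = (p ^ a - q ^ a) * (1 - p) ^ b + q ^ a * ((1 - p) ^ b - (1 - q) ^ b) := by
    simp only [bernFn]; ring
  have hb : |(1 - p) ^ b - (1 - q) ^ b| ≤ b * |p - q| := by
    have := pow_abs_diff (p := 1 - p) (q := 1 - q)
      (by linarith) (by linarith) (by linarith) (by linarith) b
    calc |(1-p)^b - (1-q)^b| ≤ b * |(1-p) - (1-q)| := this
      _ = b * |p - q| := by rw [show (1-p)-(1-q) = -(p-q) by ring, abs_neg]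
  calc |bernFn p σ - bernFn q σ|
      ≤ |(p ^ a - q ^ a) * (1 - p) ^ b| + |q ^ a * ((1 - p) ^ b - (1 - q) ^ b)| := by
        rw [key]; exact abs_add_le _ _
    _ ≤ (a * |p - q|) * 1 + 1 * (b * |p - q|) := by
        rw [abs_mul, abs_mul]
        apply add_le_add
        · refine mul_le_mul (pow_abs_diff hp0 hp1 hq0 hq1 a) ?_ (abs_nonneg _) (by positivity)
          rw [abs_pow]
          exact pow_le_one₀ (abs_nonneg _) h1
        · refine mul_le_mul ?_ hb (abs_nonneg _) zero_le_one
          rw [abs_of_nonneg (by positivity)]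
          exact pow_le_one₀ hq0 hq1
    _ = (↑a + ↑b) * |p - q| := by ring
    _ = σ.length * |p - q| := by rw [← count_tf σ]; push_cast; ring

lemma levDiff_nonneg (f g : Str → ℝ) (n : ℕ) : 0 ≤ levDiff f g n :=
  Real.sSup_nonneg (fun x ⟨v, hv⟩ => hv ▸ abs_nonneg _)

lemma levDiff_le {p q : ℝ} (hp0 : 0 ≤ p) (hp1 : p ≤ 1) (hq0 : 0 ≤ q) (hq1 : q ≤ 1)
    (n : ℕ) : levDiff (bernFn p) (bernFn q) n ≤ n * |p - q| := by
  apply Real.sSup_le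
  · rintro x ⟨v, rfl⟩
    have := bern_diff hp0 hp1 hq0 hq1 (List.ofFn v)
    simpa using this
  · positivity

lemma Dm_le {p q : ℝ} (hp0 : 0 ≤ p) (hp1 : p ≤ 1) (hq0 : 0 ≤ q) (hq1 : q ≤ 1) :
    Dm (bernFn p) (bernFn q) ≤ 2 * |p - q| := by
  have hs : Summable (fun n : ℕ => (n : ℝ) * (2:ℝ)⁻¹ ^ n) := by
    have := summable_pow_mul_geometric_of_norm_lt_one (R := ℝ) 1 (r := (2:ℝ)⁻¹)
      (by rw [Real.norm_eq_abs]; rw [abs_of_nonneg] <;> norm_num)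
    simpa using this
  have hs2 : Summable (fun n : ℕ => (2:ℝ)⁻¹ ^ n * ((n:ℝ) * |p - q|)) := by
    have := hs.mul_right |p - q|
    apply this.congr
    intro n; ring
  have hsum : Summable (fun n : ℕ => (2:ℝ)⁻¹ ^ n * levDiff (bernFn p) (bernFn q) n) := by
    refine Summable.of_nonneg_of_le (fun n => ?_) (fun n => ?_) hs2
    · have := levDiff_nonneg (bernFn p) (bernFn q) n
      positivity
    · have := levDiff_le hp0 hp1 hq0 hq1 n
      have h2 : (0:ℝ) ≤ (2:ℝ)⁻¹ ^ n := by positivity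
      exact mul_le_mul_of_nonneg_left this h2
  calc Dm (bernFn p) (bernFn q)
      ≤ ∑' n : ℕ, (2:ℝ)⁻¹ ^ n * ((n:ℝ) * |p - q|) := by
        refine Summable.tsum_le_tsum (fun n => ?_) hsum hs2
        exact mul_le_mul_of_nonneg_left (levDiff_le hp0 hp1 hq0 hq1 n) (by positivity)
    _ = (∑' n : ℕ, (n:ℝ) * (2:ℝ)⁻¹ ^ n) * |p - q| := by
        rw [← tsum_mul_right]
        congr 1; funext n; ring
    _ = 2 * |p - q| := by
        rw [tsum_coe_mul_geometric_of_norm_lt_one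
          (by rw [Real.norm_eq_abs, abs_of_nonneg] <;> norm_num)]
        norm_num

theorem stmt15 :
    (∀ X : Cantor, ∀ ε > (0 : ℝ), ∃ N : ℕ, ∀ Y : Cantor,
      restr X N = restr Y N → Dm (bernFn (binVal X)) (bernFn (binVal Y)) < ε) ∧
    ∃ g : ℕ → ℕ, Computable g ∧ ∀ (n : ℕ) (X Y : Cantor),
      restr X (g n) = restr Y (g n) →
        Dm (bernFn (binVal X)) (bernFn (binVal Y)) < (2 : ℝ)⁻¹ ^ n := by
  have main : ∀ (N : ℕ) (X Y : Cantor), restr X N = restr Y N →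
      Dm (bernFn (binVal X)) (bernFn (binVal Y)) ≤ 2 * (2 : ℝ)⁻¹ ^ N := by
    intro N X Y h
    calc Dm (bernFn (binVal X)) (bernFn (binVal Y)) ≤ 2 * |binVal X - binVal Y| :=
          Dm_le (binVal_nonneg X) (binVal_le_one X) (binVal_nonneg Y) (binVal_le_one Y)
      _ ≤ 2 * (2 : ℝ)⁻¹ ^ N := by
          have := binVal_dist X Y N (restr_eq h)
          linarith
  constructor
  · intro X ε hε
    obtain ⟨N, hN⟩ := exists_pow_lt_of_lt_one (by linarith : (0:ℝ) < ε / 2)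
      (by norm_num : (2:ℝ)⁻¹ < 1)
    exact ⟨N, fun Y h => lt_of_le_of_lt (main N X Y h) (by linarith)⟩
  · refine ⟨fun n => n + 2, Primrec.to_comp (Primrec.succ.comp Primrec.succ), ?_⟩
    intro n X Y h
    refine lt_of_le_of_lt (main (n + 2) X Y h) ?_
    have hpos : (0:ℝ) < (2:ℝ)⁻¹ ^ n := by positivity
    rw [pow_succ, pow_succ]
    nlinarith
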